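/- Let G₂, G₃ be topological groups with free continuous actions on spaces M₂, M₃ such that the quotient maps pᵢ : Mᵢ → Mᵢ/Gᵢ are principal Gᵢ-bundles (in particular Serre fibrations). Let φ : G₂ → G₃ be a continuous group homomorphism and f : M₂ → M₃ a φ-equivariant Serre fibration. Then the induced map ψ : M₂/G₂ → M₃/G₃ on orbit spaces is a Serre fibration. -/

import Mathlib

open unitInterval

/-- The closed `i`-dimensional disc `Dⁱ`. -/
abbrev Disc (i : ℕ) := (Metric.closedBall (0 : EuclideanSpace ℝ (Fin i)) 1 :
    Set (EuclideanSpace ℝ (Fin i)))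

/-- A continuous map is a *Serre fibration* if it has the homotopy lifting property with
respect to the inclusions `Dⁱ × {0} ↪ Dⁱ × I` for all `i ≥ 0`. -/
def IsSerreFibration {X Y : Type*} [TopologicalSpace X] [TopologicalSpace Y] (f : X → Y) : Prop :=
  Continuous f ∧
  ∀ (i : ℕ) (H : C(Disc i × I, Y)) (h₀ : C(Disc i, X)),
    (∀ d, f (h₀ d) = H (d, 0)) →
    ∃ H' : C(Disc i × I, X), (∀ p, f (H' p) = H p) ∧ (∀ d, H' (d, 0) = h₀ d)

/-- Straight-line contraction of the disc. -/
noncomputable def contractD (i : ℕ) : C(Disc i × I, Disc i) where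
  toFun p := ⟨(p.2 : ℝ) • (p.1 : EuclideanSpace ℝ (Fin i)), by
    have h1 := p.1.2
    simp only [Metric.mem_closedBall, dist_zero_right] at h1 ⊢
    rw [norm_smul]
    have h2 : |(p.2 : ℝ)| ≤ 1 := abs_le.mpr ⟨by linarith [p.2.2.1], p.2.2.2⟩
    calc ‖(p.2 : ℝ)‖ * ‖(p.1 : EuclideanSpace ℝ (Fin i))‖ ≤ 1 * 1 :=
          mul_le_mul h2 h1 (norm_nonneg _) zero_le_one
      _ = 1 := one_mul 1⟩
  continuous_toFun := by
    apply Continuous.subtype_mk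
    exact ((continuous_subtype_val.comp continuous_snd).smul
      (continuous_subtype_val.comp continuous_fst))

lemma contractD_zero (i : ℕ) (d : Disc i) :
    contractD i (d, 0) = ⟨0, Metric.mem_closedBall_self zero_le_one⟩ := by
  apply Subtype.ext
  simp [contractD]

lemma contractD_one (i : ℕ) (d : Disc i) : contractD i (d, 1) = d := by
  apply Subtype.ext
  simp [contractD]

/-- Lemma (descent of fibrations to orbit spaces): given free continuous actions of topological
groups `G₂`, `G₃` on `M₂`, `M₃` whose quotient maps are principal bundles (in particular Serre
fibrations), a continuous homomorphism `φ : G₂ → G₃` and a `φ`-equivariant Serre fibration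
`f : M₂ → M₃`, the induced map `ψ : M₂/G₂ → M₃/G₃` is a Serre fibration. -/
theorem serreFibration_of_descend_to_orbit_spaces
    {G₂ G₃ : Type*} [Group G₂] [Group G₃] [TopologicalSpace G₂] [TopologicalSpace G₃]
    [IsTopologicalGroup G₂] [IsTopologicalGroup G₃]
    {M₂ M₃ : Type*} [TopologicalSpace M₂] [TopologicalSpace M₃]
    [MulAction G₂ M₂] [MulAction G₃ M₃] [ContinuousSMul G₂ M₂] [ContinuousSMul G₃ M₃]
    -- the actions are free
    (hfree₂ : ∀ (g : G₂) (x : M₂), g • x = x → g = 1)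
    (hfree₃ : ∀ (g : G₃) (x : M₃), g • x = x → g = 1)
    -- the quotient maps are principal bundles; in particular they are Serre fibrations
    (hp₂ : IsSerreFibration (Quotient.mk (MulAction.orbitRel G₂ M₂)))
    (hp₃ : IsSerreFibration (Quotient.mk (MulAction.orbitRel G₃ M₃)))
    (φ : G₂ →* G₃) (hφ : Continuous φ)
    (f : M₂ → M₃) (hequiv : ∀ (g : G₂) (x : M₂), f (g • x) = φ g • f x)
    (hf : IsSerreFibration f)
    (ψ : Quotient (MulAction.orbitRel G₂ M₂) → Quotient (MulAction.orbitRel G₃ M₃))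
    (hψ : ∀ x : M₂, ψ (Quotient.mk (MulAction.orbitRel G₂ M₂) x) =
      Quotient.mk (MulAction.orbitRel G₃ M₃) (f x)) :
    IsSerreFibration ψ := by
  obtain ⟨hfc, hflift⟩ := hf
  obtain ⟨hp₂c, hp₂lift⟩ := hp₂
  obtain ⟨hp₃c, hp₃lift⟩ := hp₃
  have hψc : Continuous ψ := by
    have hq : Topology.IsQuotientMap (Quotient.mk (MulAction.orbitRel G₂ M₂)) :=
      isQuotientMap_quot_mk
    rw [hq.continuous_iff]
    have : (ψ ∘ Quotient.mk (MulAction.orbitRel G₂ M₂)) =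
        (Quotient.mk (MulAction.orbitRel G₃ M₃)) ∘ f := funext hψ
    rw [this]
    exact hp₃c.comp hfc
  refine ⟨hψc, fun i H h₀ h0 => ?_⟩
  -- Step 1: lift h₀ through p₂ using the contractibility of the disc.
  obtain ⟨x₂, hx₂⟩ := Quotient.exists_rep (h₀ ⟨0, Metric.mem_closedBall_self zero_le_one⟩)
  obtain ⟨K', hK'1, hK'2⟩ := hp₂lift i (h₀.comp (contractD i))
    (ContinuousMap.const _ x₂) (fun d => by
      simp only [ContinuousMap.const_apply, ContinuousMap.comp_apply, contractD_zero]
      exact hx₂)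
  set h₀' : C(Disc i, M₂) := K'.comp ⟨fun d => (d, 1), continuous_id.prodMk continuous_const⟩ with hh₀'
  have hlift₀ : ∀ d, Quotient.mk (MulAction.orbitRel G₂ M₂) (h₀' d) = h₀ d := by
    intro d
    have := hK'1 (d, 1)
    simp [contractD_one] at this; exact this
  -- Step 2: lift H through p₃ with initial condition f ∘ h₀'.
  obtain ⟨H₃, hH₃1, hH₃2⟩ := hp₃lift i H ((ContinuousMap.mk f hfc).comp h₀') (fun d => by
    have := hψ (h₀' d)
    rw [hlift₀ d] at this
    simp only [ContinuousMap.comp_apply, ContinuousMap.coe_mk]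
    rw [← this, h0 d])
  -- Step 3: lift H₃ through f with initial condition h₀'.
  obtain ⟨H₂, hH₂1, hH₂2⟩ := hflift i H₃ h₀' (fun d => (hH₃2 d).symm)
  refine ⟨⟨fun p => Quotient.mk (MulAction.orbitRel G₂ M₂) (H₂ p),
    hp₂c.comp H₂.continuous⟩, fun p => ?_, fun d => ?_⟩
  · simp only [ContinuousMap.coe_mk]
    rw [hψ (H₂ p), hH₂1 p, hH₃1 p]
  · simp only [ContinuousMap.coe_mk]
    rw [hH₂2 d, hlift₀ d]
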